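/- arXiv:1411.1535 — 3 statements merged into one kernel-verified Lean document; each statement's English description precedes it below -/
import Mathlib

section
/- For fixed positive real numbers α and u₂,…,u_q, the function z ↦ z · ∂_z log(Path(z,u)) where Path(z,u) = 1/(1-z) + ∑_{j=2}^q (u_j − 1) z^{j−2}, is strictly increasing on (0,1), tends to 0 as z → 0⁺ and to ∞ as z → 1⁻; hence the equation z · ∂_z log(Path(z,u)) = α has a unique solution ζ ∈ (0,1). -/
open Set Filter Real Finset

namespace Stmt6

variable (q : ℕ) (u : ℕ → ℝ)

noncomputable def pp (z : ℝ) : ℝ := ∑ j ∈ Finset.Icc 2 q, (u j - 1) * z ^ (j - 2)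
noncomputable def pp1 (z : ℝ) : ℝ :=
  ∑ j ∈ Finset.Icc 2 q, (u j - 1) * ((j - 2 : ℕ) * z ^ (j - 3))
noncomputable def pp2 (z : ℝ) : ℝ :=
  ∑ j ∈ Finset.Icc 2 q, (u j - 1) * ((j - 2 : ℕ) * ((j - 3 : ℕ) * z ^ (j - 4)))
noncomputable def pth (z : ℝ) : ℝ := 1 / (1 - z) + pp q u z
noncomputable def d1 (z : ℝ) : ℝ := 1 / (1 - z) ^ 2 + pp1 q u z
noncomputable def d2 (z : ℝ) : ℝ := 2 / (1 - z) ^ 3 + pp2 q u z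
noncomputable def a (n : ℕ) : ℝ := if n ≤ q - 2 then u (n + 2) else 1

variable {z : ℝ}

theorem hasDerivAt_pth (hz : z ≠ 1) : HasDerivAt (pth q u) (d1 q u z) z := by
  have h1 : (1 : ℝ) - z ≠ 0 := sub_ne_zero.mpr (Ne.symm hz)
  have hgeo : HasDerivAt (fun w : ℝ => 1 / (1 - w)) (1 / (1 - z) ^ 2) z := by
    have h := ((hasDerivAt_id z).const_sub 1).inv h1
    simpa [one_div, neg_neg, Pi.inv_def] using h
  have hsum : HasDerivAt (fun w : ℝ => ∑ j ∈ Finset.Icc 2 q, (u j - 1) * w ^ (j - 2))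
      (pp1 q u z) z := by
    apply HasDerivAt.fun_sum
    intro j _
    have h := (hasDerivAt_pow (j - 2) z).const_mul (u j - 1)
    have h32 : j - 2 - 1 = j - 3 := by omega
    simpa [h32, mul_assoc] using h
  have := hgeo.add hsum
  simp only [pth, pp, d1]
  exact this

theorem hasDerivAt_d1 (hz : z ≠ 1) : HasDerivAt (d1 q u) (d2 q u z) z := by
  have h1 : (1 : ℝ) - z ≠ 0 := sub_ne_zero.mpr (Ne.symm hz)
  have hgeo : HasDerivAt (fun w : ℝ => 1 / (1 - w) ^ 2) (2 / (1 - z) ^ 3) z := by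
    have hin : HasDerivAt (fun w : ℝ => (1 - w) ^ 2) ((2 : ℕ) * (1 - z) ^ 1 * (-1)) z :=
      (hasDerivAt_pow 2 (1 - z)).comp z ((hasDerivAt_id z).const_sub 1)
    have h := hin.inv (pow_ne_zero 2 h1)
    have e : -((2 : ℕ) * (1 - z) ^ 1 * (-1) : ℝ) / ((1 - z) ^ 2) ^ 2 = 2 / (1 - z) ^ 3 := by
      field_simp; ring
    rw [e] at h
    simpa [one_div, Pi.inv_def] using h
  have hsum : HasDerivAt (fun w : ℝ => pp1 q u w) (pp2 q u z) z := by
    unfold pp1 pp2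
    apply HasDerivAt.fun_sum
    intro j _
    have h := ((hasDerivAt_pow (j - 3) z).const_mul ((j - 2 : ℕ) : ℝ)).const_mul (u j - 1)
    have h43 : j - 3 - 1 = j - 4 := by omega
    simpa [h43, mul_assoc, mul_comm, mul_left_comm] using h
  have h := hgeo.add hsum
  show HasDerivAt (fun w : ℝ => 1 / (1 - w) ^ 2 + pp1 q u w) (d2 q u z) z
  simpa [d2, one_div, Pi.add_def] using h


theorem hasSum_pth (hq : 2 ≤ q) (hz : z ∈ Ioo (0:ℝ) 1) :
    HasSum (fun n => a q u n * z ^ n) (pth q u z) := by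
  obtain ⟨hz0, hz1⟩ := hz
  have hgeo : HasSum (fun n : ℕ => z ^ n) (1 - z)⁻¹ :=
    hasSum_geometric_of_lt_one hz0.le hz1
  have hfin : HasSum (fun n : ℕ => (if n ≤ q - 2 then u (n + 2) - 1 else 0) * z ^ n)
      (∑ n ∈ Finset.range (q - 1), (if n ≤ q - 2 then u (n + 2) - 1 else 0) * z ^ n) := by
    apply hasSum_sum_of_ne_finset_zero
    intro n hn
    simp only [Finset.mem_range, not_lt] at hn
    rw [if_neg (by omega), zero_mul]
  have hval : (1 - z)⁻¹ + ∑ n ∈ Finset.range (q - 1),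
      (if n ≤ q - 2 then u (n + 2) - 1 else 0) * z ^ n = pth q u z := by
    rw [pth, pp, one_div]
    congr 1
    rw [show Finset.Icc 2 q = Finset.Ico 2 (q + 1) by rw [Finset.Ico_add_one_right_eq_Icc],
      Finset.sum_Ico_eq_sum_range]
    apply Finset.sum_congr (by rfl)
    intro n hn
    simp only [Finset.mem_range] at hn
    rw [if_pos (by omega), show 2 + n = n + 2 from Nat.add_comm 2 n, Nat.add_sub_cancel]
  have h := hgeo.add hfin
  rw [hval] at h
  have hfun : (fun n : ℕ => a q u n * z ^ n)
      = (fun n : ℕ => z ^ n + (if n ≤ q - 2 then u (n + 2) - 1 else 0) * z ^ n) := by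
    funext n
    by_cases hn : n ≤ q - 2
    · simp only [a, if_pos hn]; ring
    · simp only [a, if_neg hn]; ring
  rw [hfun]
  exact h

theorem hasSum_S1 (hq : 2 ≤ q) (hz : z ∈ Ioo (0:ℝ) 1) :
    HasSum (fun n : ℕ => (n : ℝ) * (a q u n * z ^ n)) (z * d1 q u z) := by
  obtain ⟨hz0, hz1⟩ := hz
  have hgeo : HasSum (fun n : ℕ => (n : ℝ) * z ^ n) (z / (1 - z) ^ 2) :=
    hasSum_coe_mul_geometric_of_norm_lt_one
      (by rw [Real.norm_eq_abs, abs_lt]; constructor <;> linarith)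
  have hfin : HasSum (fun n : ℕ => (n : ℝ) * ((if n ≤ q - 2 then u (n + 2) - 1 else 0) * z ^ n))
      (∑ n ∈ Finset.range (q - 1),
        (n : ℝ) * ((if n ≤ q - 2 then u (n + 2) - 1 else 0) * z ^ n)) := by
    apply hasSum_sum_of_ne_finset_zero
    intro n hn
    simp only [Finset.mem_range, not_lt] at hn
    rw [if_neg (by omega), zero_mul, mul_zero]
  have hval : z / (1 - z) ^ 2 + ∑ n ∈ Finset.range (q - 1),
      (n : ℝ) * ((if n ≤ q - 2 then u (n + 2) - 1 else 0) * z ^ n) = z * d1 q u z := by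
    rw [d1, one_div, mul_add]
    congr 1
    simp only [pp1]
    rw [show Finset.Icc 2 q = Finset.Ico 2 (q + 1) by rw [Finset.Ico_add_one_right_eq_Icc],
      Finset.sum_Ico_eq_sum_range, Finset.mul_sum]
    apply Finset.sum_congr (by rfl)
    intro n hn
    simp only [Finset.mem_range] at hn
    rw [if_pos (by omega), show 2 + n = n + 2 from Nat.add_comm 2 n, Nat.add_sub_cancel,
      show n + 2 - 3 = n - 1 from by omega]
    rcases Nat.eq_zero_or_pos n with h0 | h0
    · subst h0; norm_num
    have hzz : z * z ^ (n - 1) = z ^ n := by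
      rw [← pow_succ']
      congr 1
      omega
    rw [show z ^ n = z * z ^ (n - 1) from hzz.symm]
    ring
  have h := hgeo.add hfin
  rw [hval] at h
  have hfun : (fun n : ℕ => (n : ℝ) * (a q u n * z ^ n))
      = (fun n : ℕ => (n : ℝ) * z ^ n
          + (n : ℝ) * ((if n ≤ q - 2 then u (n + 2) - 1 else 0) * z ^ n)) := by
    funext n
    by_cases hn : n ≤ q - 2
    · simp only [a, if_pos hn]; ring
    · simp only [a, if_neg hn]; ring
  rw [hfun]
  exact h


theorem hasSum_sq_geometric (hz0 : (0:ℝ) < z) (hz1 : z < 1) :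
    HasSum (fun n : ℕ => (n : ℝ) ^ 2 * z ^ n) (z / (1 - z) ^ 2 + 2 * z ^ 2 / (1 - z) ^ 3) := by
  have hnorm : ‖z‖ < 1 := by rw [Real.norm_eq_abs, abs_lt]; constructor <;> linarith
  have hch : HasSum (fun n : ℕ => (((n + 2).choose 2 : ℕ) : ℝ) * z ^ n) (1 / (1 - z) ^ 3) := by
    simpa using hasSum_choose_mul_geometric_of_norm_lt_one 2 hnorm
  have hn1 : HasSum (fun n : ℕ => (n : ℝ) * z ^ n) (z / (1 - z) ^ 2) :=
    hasSum_coe_mul_geometric_of_norm_lt_one hnorm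
  have hg : HasSum (fun n : ℕ => z ^ n) (1 - z)⁻¹ := hasSum_geometric_of_lt_one hz0.le hz1
  have hcast : ∀ n : ℕ, (((n + 2).choose 2 : ℕ) : ℝ) = ((n : ℝ) + 2) * ((n : ℝ) + 1) / 2 := by
    intro n
    have h2 : (n + 2).choose 2 = (n + 2) * (n + 1) / 2 := by
      rw [Nat.choose_two_right, show n + 2 - 1 = n + 1 from rfl]
    have hdvd : 2 ∣ (n + 2) * (n + 1) := by
      rcases Nat.even_or_odd n with ⟨k, hk⟩ | ⟨k, hk⟩
      · exact Dvd.dvd.mul_right (by omega) _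
      · exact Dvd.dvd.mul_left (by omega) _
    rw [h2, Nat.cast_div hdvd (by norm_num)]
    push_cast
    ring
  have h := ((hch.mul_left 2).sub (hn1.mul_left 3)).sub (hg.mul_left 2)
  have hfun : (fun n : ℕ => 2 * ((((n + 2).choose 2 : ℕ) : ℝ) * z ^ n) - 3 * ((n : ℝ) * z ^ n)
      - 2 * z ^ n) = fun n : ℕ => (n : ℝ) ^ 2 * z ^ n := by
    funext n
    rw [hcast n]
    ring
  rw [hfun] at h
  convert h using 1
  have h1 : (1 : ℝ) - z ≠ 0 := by intro h; linarith [h]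
  case e'_3 => rfl
  field_simp
  ring

theorem hasSum_S2 (hq : 2 ≤ q) (hz : z ∈ Ioo (0:ℝ) 1) :
    HasSum (fun n : ℕ => (n : ℝ) ^ 2 * (a q u n * z ^ n))
      (z * d1 q u z + z ^ 2 * d2 q u z) := by
  obtain ⟨hz0, hz1⟩ := hz
  have hgeo := hasSum_sq_geometric hz0 hz1
  have hfin : HasSum
      (fun n : ℕ => (n : ℝ) ^ 2 * ((if n ≤ q - 2 then u (n + 2) - 1 else 0) * z ^ n))
      (∑ n ∈ Finset.range (q - 1),
        (n : ℝ) ^ 2 * ((if n ≤ q - 2 then u (n + 2) - 1 else 0) * z ^ n)) := by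
    apply hasSum_sum_of_ne_finset_zero
    intro n hn
    simp only [Finset.mem_range, not_lt] at hn
    rw [if_neg (by omega), zero_mul, mul_zero]
  have hval : z / (1 - z) ^ 2 + 2 * z ^ 2 / (1 - z) ^ 3 + ∑ n ∈ Finset.range (q - 1),
      (n : ℝ) ^ 2 * ((if n ≤ q - 2 then u (n + 2) - 1 else 0) * z ^ n)
      = z * d1 q u z + z ^ 2 * d2 q u z := by
    simp only [d1, d2, one_div]
    have hrw : ∑ n ∈ Finset.range (q - 1),
        (n : ℝ) ^ 2 * ((if n ≤ q - 2 then u (n + 2) - 1 else 0) * z ^ n)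
        = z * pp1 q u z + z ^ 2 * pp2 q u z := by
      simp only [pp1, pp2]
      rw [Finset.mul_sum, Finset.mul_sum, ← Finset.sum_add_distrib,
        show Finset.Icc 2 q = Finset.Ico 2 (q + 1) by rw [Finset.Ico_add_one_right_eq_Icc],
        Finset.sum_Ico_eq_sum_range]
      apply Finset.sum_congr (by rfl)
      intro n hn
      simp only [Finset.mem_range] at hn
      rw [if_pos (by omega), show 2 + n = n + 2 from Nat.add_comm 2 n, Nat.add_sub_cancel,
        show n + 2 - 3 = n - 1 from by omega, show n + 2 - 4 = n - 2 from by omega]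
      rcases Nat.lt_or_ge n 2 with h2 | h2
      · interval_cases n <;> · norm_num; try ring
      have hc1 : ((n - 1 : ℕ) : ℝ) = (n : ℝ) - 1 := by
        rw [Nat.cast_sub (by omega)]; norm_num
      have e1 : z ^ (n - 1) = z ^ n / z := by
        rw [eq_div_iff hz0.ne', ← pow_succ]
        congr 1
        omega
      have e2 : z ^ (n - 2) = z ^ n / z ^ 2 := by
        rw [eq_div_iff (pow_ne_zero 2 hz0.ne'), ← pow_add]
        congr 1
        omega
      rw [e1, e2, hc1]
      field_simp
      ring
    rw [hrw]
    field_simp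
    ring
  have h := hgeo.add hfin
  rw [hval] at h
  have hfun : (fun n : ℕ => (n : ℝ) ^ 2 * (a q u n * z ^ n))
      = (fun n : ℕ => (n : ℝ) ^ 2 * z ^ n
          + (n : ℝ) ^ 2 * ((if n ≤ q - 2 then u (n + 2) - 1 else 0) * z ^ n)) := by
    funext n
    by_cases hn : n ≤ q - 2
    · simp only [a, if_pos hn]; ring
    · simp only [a, if_neg hn]; ring
  rw [hfun]
  exact h


theorem cs_finset (b : ℕ → ℝ) (hb : ∀ n, 0 ≤ b n) (k : ℕ) (hk : 0 < k)
    (s : Finset ℕ) (h0 : 0 ∈ s) (hks : k ∈ s) :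
    b 0 * b k * (k : ℝ) ^ 2 ≤ (∑ n ∈ s, b n) * (∑ n ∈ s, (n : ℝ) ^ 2 * b n)
      - (∑ n ∈ s, (n : ℝ) * b n) ^ 2 := by
  have hAC : (∑ n ∈ s, b n) * (∑ n ∈ s, (n : ℝ) ^ 2 * b n)
      = ∑ i ∈ s, ∑ j ∈ s, b i * b j * (j : ℝ) ^ 2 := by
    rw [Finset.sum_mul_sum]
    exact Finset.sum_congr rfl fun i _ => Finset.sum_congr rfl fun j _ => by ring
  have hCA : (∑ n ∈ s, b n) * (∑ n ∈ s, (n : ℝ) ^ 2 * b n)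
      = ∑ i ∈ s, ∑ j ∈ s, b i * b j * (i : ℝ) ^ 2 := by
    rw [hAC, Finset.sum_comm]
    exact Finset.sum_congr rfl fun i _ => Finset.sum_congr rfl fun j _ => by ring
  have hB2 : (∑ n ∈ s, (n : ℝ) * b n) ^ 2
      = ∑ i ∈ s, ∑ j ∈ s, b i * b j * ((i : ℝ) * (j : ℝ)) := by
    rw [sq, Finset.sum_mul_sum]
    exact Finset.sum_congr rfl fun i _ => Finset.sum_congr rfl fun j _ => by ring
  have key : 2 * ((∑ n ∈ s, b n) * (∑ n ∈ s, (n : ℝ) ^ 2 * b n)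
      - (∑ n ∈ s, (n : ℝ) * b n) ^ 2)
      = ∑ p ∈ s ×ˢ s, b p.1 * b p.2 * ((p.1 : ℝ) - (p.2 : ℝ)) ^ 2 := by
    rw [Finset.sum_product]
    have : ∑ i ∈ s, ∑ j ∈ s, b i * b j * ((i : ℝ) - (j : ℝ)) ^ 2
        = ∑ i ∈ s, ∑ j ∈ s, (b i * b j * (i : ℝ) ^ 2 + b i * b j * (j : ℝ) ^ 2
          - 2 * (b i * b j * ((i : ℝ) * (j : ℝ)))) := by
      exact Finset.sum_congr rfl fun i _ => Finset.sum_congr rfl fun j _ => by ring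
    rw [this]
    simp only [Finset.sum_sub_distrib, Finset.sum_add_distrib, ← Finset.mul_sum]
    nlinarith [hAC, hCA, hB2]
  have hsub : ({(0, k), (k, 0)} : Finset (ℕ × ℕ)) ⊆ s ×ˢ s := by
    intro p hp
    simp only [Finset.mem_insert, Finset.mem_singleton] at hp
    rcases hp with h | h <;> subst h <;> simp [Finset.mem_product, h0, hks]
  have hbound : 2 * (b 0 * b k * (k : ℝ) ^ 2)
      ≤ ∑ p ∈ s ×ˢ s, b p.1 * b p.2 * ((p.1 : ℝ) - (p.2 : ℝ)) ^ 2 := by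
    have hne : ((0 : ℕ), k) ≠ ((k : ℕ), 0) := by
      intro h
      exact absurd (congrArg Prod.fst h) (by simpa using hk.ne)
    have hsum2 : ∑ p ∈ ({(0, k), (k, 0)} : Finset (ℕ × ℕ)),
        b p.1 * b p.2 * ((p.1 : ℝ) - (p.2 : ℝ)) ^ 2 = 2 * (b 0 * b k * (k : ℝ) ^ 2) := by
      rw [Finset.sum_insert (by simpa using hne), Finset.sum_singleton]
      ring
    rw [← hsum2]
    apply Finset.sum_le_sum_of_subset_of_nonneg hsub
    intro p _ _
    have := hb p.1
    have := hb p.2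
    positivity
  nlinarith [key, hbound]

theorem a_pos (hq : 2 ≤ q) (hu : ∀ j ∈ Finset.Icc 2 q, 0 < u j) (n : ℕ) : 0 < a q u n := by
  unfold a
  split
  · exact hu (n + 2) (Finset.mem_Icc.mpr ⟨by omega, by omega⟩)
  · norm_num

theorem pth_pos (hq : 2 ≤ q) (hu : ∀ j ∈ Finset.Icc 2 q, 0 < u j) (hz : z ∈ Ioo (0:ℝ) 1) :
    0 < pth q u z := by
  have h := hasSum_pth q u hq hz
  have h0 : HasSum (fun _ : ℕ => (0 : ℝ)) 0 := hasSum_zero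
  refine hasSum_lt (f := fun _ : ℕ => (0 : ℝ)) (i := 0) ?_ ?_ h0 h
  · intro n
    have := a_pos q u hq hu n
    have := pow_pos hz.1 n
    positivity
  · have := a_pos q u hq hu 0
    simpa using this

theorem numerator_pos (hq : 2 ≤ q) (hu : ∀ j ∈ Finset.Icc 2 q, 0 < u j)
    (hz : z ∈ Ioo (0:ℝ) 1) :
    0 < pth q u z * (d1 q u z + z * d2 q u z) - z * d1 q u z ^ 2 := by
  obtain ⟨hz0, hz1⟩ := hz
  set b : ℕ → ℝ := fun n => a q u n * z ^ n with hbdef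
  have hb : ∀ n, 0 ≤ b n := fun n =>
    le_of_lt (mul_pos (a_pos q u hq hu n) (pow_pos hz0 n))
  have h0 := hasSum_pth q u hq ⟨hz0, hz1⟩
  have h1 := hasSum_S1 q u hq ⟨hz0, hz1⟩
  have h2 := hasSum_S2 q u hq ⟨hz0, hz1⟩
  -- limit of finite CS inequality
  have hgap : b 0 * b (q - 1) * ((q - 1 : ℕ) : ℝ) ^ 2
      ≤ pth q u z * (z * d1 q u z + z ^ 2 * d2 q u z) - (z * d1 q u z) ^ 2 := by
    have htend : Tendsto (fun m : ℕ =>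
        (∑ n ∈ Finset.range m, b n) * (∑ n ∈ Finset.range m, (n : ℝ) ^ 2 * b n)
        - (∑ n ∈ Finset.range m, (n : ℝ) * b n) ^ 2) atTop
        (nhds (pth q u z * (z * d1 q u z + z ^ 2 * d2 q u z) - (z * d1 q u z) ^ 2)) :=
      (h0.tendsto_sum_nat.mul h2.tendsto_sum_nat).sub (h1.tendsto_sum_nat.pow 2)
    refine ge_of_tendsto htend ?_
    rw [eventually_atTop]
    refine ⟨q, fun m hm => ?_⟩
    exact cs_finset b hb (q - 1) (by omega) (Finset.range m)
      (Finset.mem_range.mpr (by omega)) (Finset.mem_range.mpr (by omega))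
  have hb0 : b 0 = u 2 := by
    simp [hbdef, a]
  have hbq : b (q - 1) = z ^ (q - 1) := by
    have : ¬ (q - 1 ≤ q - 2) := by omega
    simp [hbdef, a, this]
  have hu2 : 0 < u 2 := hu 2 (Finset.mem_Icc.mpr ⟨le_refl 2, hq⟩)
  have hqcast : (0 : ℝ) < ((q - 1 : ℕ) : ℝ) ^ 2 := by
    have : (1 : ℕ) ≤ q - 1 := by omega
    have : (1 : ℝ) ≤ ((q - 1 : ℕ) : ℝ) := by exact_mod_cast this
    nlinarith
  have hpos : 0 < b 0 * b (q - 1) * ((q - 1 : ℕ) : ℝ) ^ 2 := by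
    rw [hb0, hbq]
    have := pow_pos hz0 (q - 1)
    positivity
  have hfact : pth q u z * (z * d1 q u z + z ^ 2 * d2 q u z) - (z * d1 q u z) ^ 2
      = z * (pth q u z * (d1 q u z + z * d2 q u z) - z * d1 q u z ^ 2) := by ring
  have h := lt_of_lt_of_le hpos hgap
  rw [hfact] at h
  nlinarith [h, hz0]


noncomputable def G (z : ℝ) : ℝ := z * d1 q u z / pth q u z

theorem hasDerivAt_G (hq : 2 ≤ q) (hu : ∀ j ∈ Finset.Icc 2 q, 0 < u j)
    (hz : z ∈ Ioo (0:ℝ) 1) :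
    HasDerivAt (G q u)
      (((d1 q u z + z * d2 q u z) * pth q u z - z * d1 q u z * d1 q u z) / pth q u z ^ 2) z := by
  have hz1 : z ≠ 1 := ne_of_lt hz.2
  have hpth := pth_pos q u hq hu hz
  have hnum : HasDerivAt (fun w => w * d1 q u w) (d1 q u z + z * d2 q u z) z := by
    have h := (hasDerivAt_id z).mul (hasDerivAt_d1 q u hz1)
    simpa [Pi.mul_def] using h
  exact hnum.div (hasDerivAt_pth q u hz1) hpth.ne'

theorem strictMonoOn_G (hq : 2 ≤ q) (hu : ∀ j ∈ Finset.Icc 2 q, 0 < u j) :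
    StrictMonoOn (G q u) (Ioo (0:ℝ) 1) := by
  apply strictMonoOn_of_deriv_pos (convex_Ioo 0 1)
  · intro x hx
    exact (hasDerivAt_G q u hq hu hx).continuousAt.continuousWithinAt
  · intro x hx
    rw [interior_Ioo] at hx
    rw [(hasDerivAt_G q u hq hu hx).deriv]
    have hnum := numerator_pos q u hq hu hx
    have hpth := pth_pos q u hq hu hx
    apply div_pos _ (by positivity)
    nlinarith [hnum]

theorem g_eq_G (hq : 2 ≤ q) (hu : ∀ j ∈ Finset.Icc 2 q, 0 < u j) (hz : z ∈ Ioo (0:ℝ) 1) :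
    z * deriv (fun w => Real.log (pth q u w)) z = G q u z := by
  have hz1 : z ≠ 1 := ne_of_lt hz.2
  have hpth := pth_pos q u hq hu hz
  have h := (hasDerivAt_pth q u hz1).log hpth.ne'
  rw [h.deriv, G, mul_div_assoc]


theorem continuous_pp : Continuous (pp q u) := by
  unfold pp
  exact continuous_finset_sum _ fun j _ => by fun_prop

theorem continuous_pp1 : Continuous (pp1 q u) := by
  unfold pp1
  exact continuous_finset_sum _ fun j _ => by fun_prop

theorem pth_zero (hq : 2 ≤ q) : pth q u 0 = u 2 := by
  rw [pth, pp]
  rw [Finset.sum_eq_single 2]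
  · norm_num
  · intro j hj hj2
    simp only [Finset.mem_Icc] at hj
    rw [zero_pow (by omega), mul_zero]
  · intro h
    exact absurd (Finset.mem_Icc.mpr ⟨le_refl 2, hq⟩) h

theorem tendsto_G_zero (hq : 2 ≤ q) (hu : ∀ j ∈ Finset.Icc 2 q, 0 < u j) :
    Tendsto (G q u) (nhdsWithin 0 (Ioi 0)) (nhds 0) := by
  have hu2 : 0 < u 2 := hu 2 (Finset.mem_Icc.mpr ⟨le_refl 2, hq⟩)
  have hpth0 : pth q u 0 = u 2 := pth_zero q u hq
  have hcpth : ContinuousAt (pth q u) 0 := (hasDerivAt_pth q u (by norm_num)).continuousAt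
  have hcd1 : ContinuousAt (d1 q u) 0 := (hasDerivAt_d1 q u (by norm_num)).continuousAt
  have h : ContinuousAt (G q u) 0 := by
    apply ContinuousAt.div (continuousAt_id.mul hcd1) hcpth
    rw [hpth0]
    exact hu2.ne'
  have h0 : G q u 0 = 0 := by simp [G]
  have ht := h.tendsto
  rw [h0] at ht
  exact ht.mono_left nhdsWithin_le_nhds

theorem tendsto_G_one (hq : 2 ≤ q) (hu : ∀ j ∈ Finset.Icc 2 q, 0 < u j) :
    Tendsto (G q u) (nhdsWithin 1 (Iio 1)) atTop := by
  have hIoo : Ioo (0:ℝ) 1 ∈ nhdsWithin (1:ℝ) (Iio 1) :=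
    Ioo_mem_nhdsLT_of_mem ⟨zero_lt_one, le_refl 1⟩
  set Nf : ℝ → ℝ := fun z => z * (1 + (1 - z) ^ 2 * pp1 q u z) with hNfdef
  set Df : ℝ → ℝ := fun z => (1 - z) * (1 + (1 - z) * pp q u z) with hDfdef
  have hDfeq : ∀ z : ℝ, z ≠ 1 → Df z = (1 - z) ^ 2 * pth q u z := by
    intro z hz
    have h1 : (1:ℝ) - z ≠ 0 := sub_ne_zero.mpr (Ne.symm hz)
    simp only [hDfdef, pth]
    field_simp
  have hNfeq : ∀ z : ℝ, z ≠ 1 → Nf z = (1 - z) ^ 2 * (z * d1 q u z) := by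
    intro z hz
    have h1 : (1:ℝ) - z ≠ 0 := sub_ne_zero.mpr (Ne.symm hz)
    simp only [hNfdef, d1]
    rw [show (1 - z) ^ 2 * (z * (1 / (1 - z) ^ 2 + pp1 q u z))
        = z * ((1 - z) ^ 2 * (1 / (1 - z) ^ 2)) + z * ((1 - z) ^ 2 * pp1 q u z) from by ring,
      show ((1:ℝ) - z) ^ 2 * (1 / (1 - z) ^ 2) = 1 from by field_simp]
    ring
  have hGeq : ∀ z ∈ Ioo (0:ℝ) 1, G q u z = Nf z / Df z := by
    intro z hz
    have hz1 : z ≠ 1 := ne_of_lt hz.2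
    have h1 : ((1:ℝ) - z) ^ 2 ≠ 0 := pow_ne_zero 2 (sub_ne_zero.mpr (Ne.symm hz1))
    rw [hDfeq z hz1, hNfeq z hz1, mul_div_mul_left _ _ h1, G]
  have hNftend : Tendsto Nf (nhdsWithin 1 (Iio 1)) (nhds 1) := by
    have hc : Continuous Nf := by
      apply continuous_id.mul
      exact continuous_const.add ((by fun_prop : Continuous fun z : ℝ => (1 - z) ^ 2).mul
        (continuous_pp1 q u))
    have h1 : Nf 1 = 1 := by simp [hNfdef]
    have := hc.tendsto 1
    rw [h1] at this
    exact this.mono_left nhdsWithin_le_nhds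
  have hDftend : Tendsto Df (nhdsWithin 1 (Iio 1)) (nhdsWithin 0 (Ioi 0)) := by
    apply tendsto_nhdsWithin_of_tendsto_nhds_of_eventually_within
    · have hc : Continuous Df := by
        apply (continuous_const.sub continuous_id).mul
        exact continuous_const.add ((continuous_const.sub continuous_id).mul (continuous_pp q u))
      have h1 : Df 1 = 0 := by simp [hDfdef]
      have := hc.tendsto 1
      rw [h1] at this
      exact this.mono_left nhdsWithin_le_nhds
    · filter_upwards [hIoo] with z hz
      rw [hDfeq z (ne_of_lt hz.2)]
      have := pth_pos q u hq hu hz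
      have h1 : (0:ℝ) < 1 - z := by linarith [hz.2]
      exact mul_pos (by positivity) this
  have hinv : Tendsto (fun z => (Df z)⁻¹) (nhdsWithin 1 (Iio 1)) atTop :=
    tendsto_inv_nhdsGT_zero.comp hDftend
  have hdiv : Tendsto (fun z => Nf z * (Df z)⁻¹) (nhdsWithin 1 (Iio 1)) atTop :=
    hNftend.pos_mul_atTop zero_lt_one hinv
  apply hdiv.congr'
  filter_upwards [hIoo] with z hz
  rw [← div_eq_mul_inv, ← hGeq z hz]

end Stmt6

open Stmt6 in
/-- main -/
theorem stmt_6 (q : ℕ) (hq : 2 ≤ q) (u : ℕ → ℝ) (hu : ∀ j ∈ Finset.Icc 2 q, 0 < u j)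
    (α : ℝ) (hα : 0 < α) :
    let Path : ℝ → ℝ := fun z =>
      1 / (1 - z) + ∑ j ∈ Finset.Icc 2 q, (u j - 1) * z ^ (j - 2)
    let g : ℝ → ℝ := fun z => z * deriv (fun w => Real.log (Path w)) z
    StrictMonoOn g (Ioo (0 : ℝ) 1) ∧
    Filter.Tendsto g (nhdsWithin 0 (Ioi 0)) (nhds 0) ∧
    Filter.Tendsto g (nhdsWithin 1 (Iio 1)) Filter.atTop ∧
    ∃! ζ : ℝ, ζ ∈ Ioo (0 : ℝ) 1 ∧ g ζ = α := by
  intro Path g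
  have hgg : ∀ z : ℝ, g z = z * deriv (fun w => Real.log (pth q u w)) z := fun z => rfl
  have hgeq : ∀ z ∈ Ioo (0:ℝ) 1, g z = G q u z := fun z hz => by
    rw [hgg z]; exact g_eq_G q u hq hu hz
  have hsm : StrictMonoOn g (Ioo (0:ℝ) 1) := by
    intro x hx y hy hxy
    rw [hgeq x hx, hgeq y hy]
    exact strictMonoOn_G q u hq hu hx hy hxy
  have hIoo0 : Ioo (0:ℝ) 1 ∈ nhdsWithin (0:ℝ) (Ioi 0) :=
    Ioo_mem_nhdsGT_of_mem ⟨le_refl 0, zero_lt_one⟩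
  have hIoo1 : Ioo (0:ℝ) 1 ∈ nhdsWithin (1:ℝ) (Iio 1) :=
    Ioo_mem_nhdsLT_of_mem ⟨zero_lt_one, le_refl 1⟩
  have ht0 : Filter.Tendsto g (nhdsWithin 0 (Ioi 0)) (nhds 0) := by
    apply (tendsto_G_zero q u hq hu).congr'
    filter_upwards [hIoo0] with z hz
    exact (hgeq z hz).symm
  have ht1 : Filter.Tendsto g (nhdsWithin 1 (Iio 1)) Filter.atTop := by
    apply (tendsto_G_one q u hq hu).congr'
    filter_upwards [hIoo1] with z hz
    exact (hgeq z hz).symm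
  refine ⟨hsm, ht0, ht1, ?_⟩
  obtain ⟨a, haα, ha⟩ := ((ht0.eventually_lt_const hα).and
    (Filter.eventually_of_mem hIoo0 fun z hz => hz)).exists
  obtain ⟨b, ⟨hbα, hb⟩, hab⟩ := (((ht1.eventually_gt_atTop α).and
    (Filter.eventually_of_mem hIoo1 fun z hz => hz)).and
    (Filter.eventually_of_mem (nhdsWithin_le_nhds (Ioi_mem_nhds ha.2)) fun z hz => hz)).exists
  have hsub : Icc a b ⊆ Ioo (0:ℝ) 1 := fun t ht =>
    ⟨lt_of_lt_of_le ha.1 ht.1, lt_of_le_of_lt ht.2 hb.2⟩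
  have hcont : ContinuousOn g (Icc a b) := by
    intro t ht
    have htIoo := hsub ht
    have hGc : ContinuousAt (G q u) t := (hasDerivAt_G q u hq hu htIoo).continuousAt
    have heq : G q u =ᶠ[nhds t] g :=
      Filter.eventually_of_mem (isOpen_Ioo.mem_nhds htIoo) fun z hz => (hgeq z hz).symm
    exact (hGc.congr heq).continuousWithinAt
  have hmem : α ∈ Icc (g a) (g b) := ⟨haα.le, hbα.le⟩
  obtain ⟨ζ, hζab, hgζ⟩ := intermediate_value_Icc (le_of_lt hab) hcont hmem
  refine ⟨ζ, ⟨hsub hζab, hgζ⟩, ?_⟩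
  rintro y ⟨hy, hgy⟩
  exact hsm.injOn hy (hsub hζab) (by rw [hgy, hgζ])
end

section
/- Let α > 0 and for 2 ≤ i, j ≤ q define H_{i,j}(α) = −(α^{i+j−4}/(1+α)^{i+j−2})·(1 + (i−2−α)(j−2−α)/(α(1+α))) + 𝟙_{i=j}·(1/(1+α))·(α/(1+α))^{i−2}. Then the matrix H(α) = (H_{i,j}(α))_{2≤i,j≤q} is symmetric and positive semi-definite. -/
open Finset in
lemma geom0 (α : ℝ) (hα : 0 < α) (m : ℕ) :
    ∑ i ∈ Finset.range m, (α/(1+α))^i / (1+α) = 1 - (α/(1+α))^m := by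
  have h1 : (0:ℝ) < 1 + α := by linarith
  induction m with
  | zero => simp
  | succ m ih =>
    rw [Finset.sum_range_succ, ih, pow_succ]
    field_simp
    ring

open Finset in
lemma geom1 (α : ℝ) (hα : 0 < α) (m : ℕ) :
    ∑ i ∈ Finset.range m, (α/(1+α))^i / (1+α) * ((i:ℝ) - α) = -(m:ℝ) * (α/(1+α))^m := by
  have h1 : (0:ℝ) < 1 + α := by linarith
  induction m with
  | zero => simp
  | succ m ih =>
    rw [Finset.sum_range_succ, ih, pow_succ]
    push_cast
    field_simp
    ring

open Finset in
lemma geom2 (α : ℝ) (hα : 0 < α) (m : ℕ) :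
    ∑ i ∈ Finset.range m, (α/(1+α))^i / (1+α) * ((i:ℝ) - α)^2
      = α*(1+α) - (α/(1+α))^m * (α*(1+α) + (m:ℝ)^2) := by
  have h1 : (0:ℝ) < 1 + α := by linarith
  induction m with
  | zero => simp
  | succ m ih =>
    rw [Finset.sum_range_succ, ih, pow_succ (α/(1+α)) m]
    generalize (α/(1+α))^m = u
    push_cast
    field_simp
    ring

/-- For `α > 0` and `q ≥ 2`, the matrix `H(α)` with rows and columns indexed by
`2 ≤ i, j ≤ q` (here represented by `Fin (q-1)` via `i ↦ i+2`) and entries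
`H_{i,j}(α) = −(α^{i+j−4}/(1+α)^{i+j−2})(1 + (i−2−α)(j−2−α)/(α(1+α)))
+ 𝟙_{i=j}(1/(1+α))(α/(1+α))^{i−2}` is symmetric and positive semi-definite. -/
theorem stmt_11 (q : ℕ) (hq : 2 ≤ q) (α : ℝ) (hα : 0 < α)
    (H : Matrix (Fin (q - 1)) (Fin (q - 1)) ℝ)
    (hH : ∀ i j : Fin (q - 1), H i j =
      -(α ^ (((i : ℕ) + 2) + ((j : ℕ) + 2) - 4) / (1 + α) ^ (((i : ℕ) + 2) + ((j : ℕ) + 2) - 2)) *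
          (1 + ((((i : ℕ) + 2 : ℝ) - 2 - α) * (((j : ℕ) + 2 : ℝ) - 2 - α)) / (α * (1 + α))) +
        (if i = j then (1 / (1 + α)) * (α / (1 + α)) ^ ((i : ℕ) + 2 - 2) else 0)) :
    H.IsSymm ∧ H.PosSemidef := by
  have h1a : (0:ℝ) < 1 + α := by linarith
  set t : ℝ := α / (1 + α) with ht_def
  have ht : 0 < t := div_pos hα h1a
  set V : ℝ := α * (1 + α) with hV_def
  have hV : 0 < V := mul_pos hα h1a
  set p : Fin (q-1) → ℝ := fun i => t ^ (i:ℕ) / (1 + α) with hp_def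
  have hp_pos : ∀ i, 0 < p i := fun i => div_pos (pow_pos ht _) h1a
  -- rewrite the entries
  have hH' : ∀ i j, H i j =
      -(p i * p j * (1 + ((i:ℝ) - α) * ((j:ℝ) - α) / V)) + (if i = j then p i else 0) := by
    intro i j
    rw [hH]
    have e1 : ((i : ℕ) + 2) + ((j : ℕ) + 2) - 4 = (i:ℕ) + (j:ℕ) := by omega
    have e2 : ((i : ℕ) + 2) + ((j : ℕ) + 2) - 2 = (i:ℕ) + (j:ℕ) + 2 := by omega
    have e3 : (i : ℕ) + 2 - 2 = (i:ℕ) := by omega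
    rw [e1, e2, e3]
    have hpp : p i * p j = α ^ ((i:ℕ) + (j:ℕ)) / (1 + α) ^ ((i:ℕ) + (j:ℕ) + 2) := by
      simp only [hp_def, ht_def, div_pow]
      rw [pow_add α, pow_add (1+α), pow_add (1+α)]
      field_simp
    have hcast : (((i : ℕ) + 2 : ℝ) - 2 - α) = (i:ℝ) - α := by push_cast; ring
    have hcast' : (((j : ℕ) + 2 : ℝ) - 2 - α) = (j:ℝ) - α := by push_cast; ring
    rw [hcast, hcast', hpp]
    congr 1
    · ring
    · by_cases h : i = j <;> simp [h, hp_def, ht_def, div_eq_mul_inv, mul_comm]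
  constructor
  · -- symmetry
    ext i j
    rw [Matrix.transpose_apply, hH', hH']
    by_cases h : i = j
    · subst h; ring
    · simp [h, Ne.symm h]; ring
  rw [Matrix.posSemidef_iff_dotProduct_mulVec]
  constructor
  · -- Hermitian
    ext i j
    simp only [Matrix.conjTranspose_apply, star_trivial]
    rw [hH', hH']
    by_cases h : i = j
    · subst h; ring
    · simp [h, Ne.symm h]; ring
  -- quadratic form
  intro x
  set T0 : ℝ := ∑ i, p i * x i ^ 2 with hT0_def
  set T1 : ℝ := ∑ i, p i * x i with hT1_def
  set T2 : ℝ := ∑ i, p i * ((i:ℝ) - α) * x i with hT2_def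
  have hT0 : 0 ≤ T0 := Finset.sum_nonneg fun i _ => mul_nonneg (hp_pos i).le (sq_nonneg _)
  have expand : ∀ i, Matrix.mulVec H x i
      = (-T1) * p i + (-(T2 / V)) * (p i * ((i:ℝ) - α)) + p i * x i := by
    intro i
    show ∑ j, H i j * x j = _
    calc ∑ j, H i j * x j
        = ∑ j, (((-(p i)) * (p j * x j) + (-(p i * ((i:ℝ) - α) / V)) * (p j * ((j:ℝ) - α) * x j))
            + (if i = j then p i * x j else 0)) := by
          refine Finset.sum_congr rfl fun j _ => ?_
          rw [hH']
          by_cases h : i = j <;> simp [h] <;> ring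
      _ = _ := by
          rw [Finset.sum_add_distrib, Finset.sum_add_distrib, ← Finset.mul_sum, ← Finset.mul_sum]
          simp only [Finset.sum_ite_eq, Finset.mem_univ, if_true, ← hT1_def, ← hT2_def]
          field_simp
  have key : dotProduct (star x) (Matrix.mulVec H x) = T0 - T1 ^ 2 - T2 ^ 2 / V := by
    simp only [star_trivial, dotProduct]
    calc ∑ i, x i * Matrix.mulVec H x i
        = ∑ i, ((-T1) * (p i * x i) + (-(T2 / V)) * (p i * ((i:ℝ) - α) * x i)
            + p i * x i ^ 2) := by
          refine Finset.sum_congr rfl fun i _ => ?_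
          rw [expand i]; ring
      _ = (-T1) * T1 + (-(T2 / V)) * T2 + T0 := by
          rw [Finset.sum_add_distrib, Finset.sum_add_distrib, ← Finset.mul_sum, ← Finset.mul_sum]
      _ = T0 - T1 ^ 2 - T2 ^ 2 / V := by ring
  rw [key]
  -- closed forms for the moment sums
  have hτ : 0 < t ^ (q-1) := pow_pos ht _
  have hS0 : (∑ i, p i) = 1 - t ^ (q-1) := by
    rw [show (∑ i, p i) = ∑ i ∈ Finset.range (q-1), (α/(1+α))^i / (1+α) from
      Fin.sum_univ_eq_sum_range (fun i => (α/(1+α))^i / (1+α)) (q-1)]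
    exact geom0 α hα (q-1)
  have hS1 : (∑ i, p i * ((i:ℝ) - α)) = -((q-1:ℕ):ℝ) * t ^ (q-1) := by
    rw [show (∑ i, p i * ((i:ℝ) - α))
        = ∑ i ∈ Finset.range (q-1), (α/(1+α))^i / (1+α) * ((i:ℝ) - α) from
      Fin.sum_univ_eq_sum_range (fun i => (α/(1+α))^i / (1+α) * ((i:ℝ) - α)) (q-1)]
    exact geom1 α hα (q-1)
  have hS2 : (∑ i, p i * ((i:ℝ) - α)^2) = V - t ^ (q-1) * (V + ((q-1:ℕ):ℝ)^2) := by
    rw [show (∑ i, p i * ((i:ℝ) - α)^2)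
        = ∑ i ∈ Finset.range (q-1), (α/(1+α))^i / (1+α) * ((i:ℝ) - α)^2 from
      Fin.sum_univ_eq_sum_range (fun i => (α/(1+α))^i / (1+α) * ((i:ℝ) - α)^2) (q-1)]
    exact geom2 α hα (q-1)
  set m : ℝ := ((q-1:ℕ):ℝ) with hm_def
  set τ : ℝ := t ^ (q-1) with hτ_def
  set E : ℝ := V * T1^2 + T2^2 with hE_def
  -- Cauchy-Schwarz with weights p i, test vector V*T1 + T2*(i-α)
  have hCS : E^2 ≤ (V*E - τ*((V*T1 + m*T2)^2 + V*T2^2)) * T0 := by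
    have CS := Finset.sum_sq_le_sum_mul_sum_of_sq_eq_mul (Finset.univ (α := Fin (q-1)))
      (r := fun i => p i * (V*T1 + T2*((i:ℝ)-α)) * x i)
      (f := fun i => p i * (V*T1 + T2*((i:ℝ)-α))^2)
      (g := fun i => p i * x i^2)
      (fun i _ => mul_nonneg (hp_pos i).le (sq_nonneg _))
      (fun i _ => mul_nonneg (hp_pos i).le (sq_nonneg _))
      (fun i _ => by ring)
    have l1 : (∑ i, p i * (V*T1 + T2*((i:ℝ)-α)) * x i) = E := by
      calc (∑ i, p i * (V*T1 + T2*((i:ℝ)-α)) * x i)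
          = ∑ i, ((V*T1) * (p i * x i) + T2 * (p i * ((i:ℝ)-α) * x i)) := by
            refine Finset.sum_congr rfl fun i _ => by ring
        _ = (V*T1) * T1 + T2 * T2 := by
            rw [Finset.sum_add_distrib, ← Finset.mul_sum, ← Finset.mul_sum]
        _ = E := by rw [hE_def]; ring
    have l2 : (∑ i, p i * (V*T1 + T2*((i:ℝ)-α))^2)
        = V*E - τ*((V*T1 + m*T2)^2 + V*T2^2) := by
      calc (∑ i, p i * (V*T1 + T2*((i:ℝ)-α))^2)
          = ∑ i, ((V*T1)^2 * p i + (2*(V*T1)*T2) * (p i * ((i:ℝ)-α))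
              + T2^2 * (p i * ((i:ℝ)-α)^2)) := by
            refine Finset.sum_congr rfl fun i _ => by ring
        _ = (V*T1)^2 * (∑ i, p i) + (2*(V*T1)*T2) * (∑ i, p i * ((i:ℝ)-α))
              + T2^2 * (∑ i, p i * ((i:ℝ)-α)^2) := by
            rw [Finset.sum_add_distrib, Finset.sum_add_distrib, ← Finset.mul_sum,
              ← Finset.mul_sum, ← Finset.mul_sum]
        _ = _ := by rw [hS0, hS1, hS2, hE_def]; ring
    calc E^2 = (∑ i, p i * (V*T1 + T2*((i:ℝ)-α)) * x i)^2 := by rw [l1]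
      _ ≤ (∑ i, p i * (V*T1 + T2*((i:ℝ)-α))^2) * (∑ i, p i * x i^2) := CS
      _ = (V*E - τ*((V*T1 + m*T2)^2 + V*T2^2)) * T0 := by rw [l2]
  clear_value T0 T1 T2 m τ E
  clear hH hH' expand key hS0 hS1 hS2 H hp_pos hT0_def hT1_def hT2_def hm_def hτ_def x hp_def p
  have h4 : E^2 ≤ V*E*T0 := by
    refine hCS.trans (mul_le_mul_of_nonneg_right ?_ hT0)
    nlinarith [sq_nonneg (V*T1 + m*T2), sq_nonneg T2, hτ.le, hV.le,
      mul_nonneg (sq_nonneg (V*T1 + m*T2)) hτ.le, mul_nonneg (mul_nonneg hV.le (sq_nonneg T2)) hτ.le]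
  have hE0 : 0 ≤ E := by
    rw [hE_def]
    nlinarith [mul_nonneg hV.le (sq_nonneg T1), sq_nonneg T2]
  rcases hE0.eq_or_lt with h | h
  · have hT1 : T1^2 = 0 := by nlinarith [sq_nonneg T1, sq_nonneg T2]
    have hT2 : T2^2 = 0 := by nlinarith [sq_nonneg T1, sq_nonneg T2]
    rw [hT1, hT2]
    simpa using hT0
  · have hle : E ≤ V*T0 := by nlinarith
    have h6 : T1^2 + T2^2/V = E/V := by
      rw [hE_def]
      field_simp
    have h7 : E/V ≤ T0 := by
      rw [div_le_iff₀ hV]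
      linarith [hle]
    linarith
end

section
/- Let φ : ℝ → ℂ be continuous on [−ε, ε] with Re φ(θ) ≥ 0 for all θ, with equality only at θ = 0, and suppose φ(θ) = c θ²/2 + O(θ³) near 0 with c > 0. Let A : [−ε,ε] → ℂ be continuous with A(θ) = A(0) + O(θ) near 0 and A(0) ≠ 0. Then ∫_{−ε}^{ε} A(θ) e^{−nφ(θ)} dθ = √(2π) A(0)/√(n c) · (1 + o(1)) as n → ∞. -/
open Real Filter intervalIntegral

section stmt15aux
open MeasureTheory Asymptotics

lemma stmt15_taylor (c : ℝ) (φ : ℝ → ℂ)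
    (hφtaylor : (fun θ : ℝ => φ θ - (c : ℂ) * θ ^ 2 / 2) =O[nhds 0] fun θ : ℝ => |θ| ^ 3) :
    ∃ C > (0:ℝ), ∃ δ > (0:ℝ), ∀ θ : ℝ, |θ| < δ → ‖φ θ - (c:ℂ) * θ^2 / 2‖ ≤ C * |θ|^3 := by
  obtain ⟨C, hC, hCb⟩ := hφtaylor.exists_pos
  have hb := hCb.bound
  rw [Metric.eventually_nhds_iff] at hb
  obtain ⟨δ, hδ, hb⟩ := hb
  refine ⟨C, hC, δ, hδ, fun θ hθ => ?_⟩
  have := hb (y := θ) (by simpa [Real.dist_eq] using hθ)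
  simpa [Real.norm_eq_abs, abs_pow, abs_abs] using this

lemma stmt15_sqrt : Tendsto (fun n : ℕ => Real.sqrt n) atTop atTop := by
  have h : Tendsto Real.sqrt atTop atTop := by
    apply tendsto_atTop_atTop.2
    intro b
    refine ⟨(max b 0)^2, fun x hx => ?_⟩
    have h2 : max b 0 ≤ Real.sqrt x := by
      rw [show max b 0 = Real.sqrt ((max b 0)^2) from (Real.sqrt_sq (le_max_right _ _)).symm]
      exact Real.sqrt_le_sqrt hx
    exact le_trans (le_max_left _ _) h2
  exact h.comp tendsto_natCast_atTop_atTop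

lemma stmt15_low (ε : ℝ) (hε : 0 < ε) (c : ℝ) (hc : 0 < c) (φ : ℝ → ℂ)
    (hφcont : ContinuousOn φ (Set.Icc (-ε) ε))
    (hφre : ∀ θ ∈ Set.Icc (-ε) ε, 0 ≤ (φ θ).re)
    (hφzero : ∀ θ ∈ Set.Icc (-ε) ε, (φ θ).re = 0 → θ = 0)
    (hφtaylor : (fun θ : ℝ => φ θ - (c : ℂ) * θ ^ 2 / 2) =O[nhds 0] fun θ : ℝ => |θ| ^ 3) :
    ∃ a > (0:ℝ), ∀ θ ∈ Set.Icc (-ε) ε, a * θ^2 ≤ (φ θ).re := by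
  obtain ⟨C, hC, δ, hδ, hCb⟩ := stmt15_taylor c φ hφtaylor
  set θ0 : ℝ := min (min (δ/2) (c/(4*C))) (ε/2) with hθ0def
  have hθ0p : 0 < θ0 := lt_min (lt_min (by linarith) (by positivity)) (by linarith)
  have hθ0δ : θ0 < δ := lt_of_le_of_lt (le_trans (min_le_left _ _) (min_le_left _ _)) (by linarith)
  have hθ0c : θ0 ≤ c/(4*C) := le_trans (min_le_left _ _) (min_le_right _ _)
  have hθ0ε : θ0 < ε := lt_of_le_of_lt (min_le_right _ _) (by linarith)
  have hquad : ∀ θ : ℝ, |θ| ≤ θ0 → c/4 * θ^2 ≤ (φ θ).re := by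
    intro θ hθ
    have h1 : ‖φ θ - (c:ℂ)*θ^2/2‖ ≤ C * |θ|^3 := hCb θ (lt_of_le_of_lt hθ hθ0δ)
    have h2 : |(φ θ - (c:ℂ)*θ^2/2).re| ≤ C * |θ|^3 :=
      le_trans (Complex.abs_re_le_norm _) h1
    have h3 : ((c:ℂ)*(θ:ℂ)^2/2).re = c*θ^2/2 := by
      have h : (c:ℂ)*(θ:ℂ)^2/2 = ((c*θ^2/2 : ℝ) : ℂ) := by push_cast; ring
      rw [h, Complex.ofReal_re]
    have h4 : (φ θ).re = c*θ^2/2 + (φ θ - (c:ℂ)*θ^2/2).re := by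
      rw [Complex.sub_re, h3]; ring
    have habs : |θ|^3 = |θ| * θ^2 := by
      rw [pow_succ, pow_two, ← sq_abs θ, pow_two]; ring
    have h5 : C * |θ|^3 ≤ c/4 * θ^2 := by
      rw [habs]
      have hCθ : C * |θ| ≤ c/4 := by
        have e1 : C * |θ| ≤ C * θ0 := by nlinarith [abs_nonneg θ]
        have e2 : C * θ0 ≤ C * (c/(4*C)) := by nlinarith
        have e3 : C * (c/(4*C)) = c/4 := by field_simp
        linarith
      nlinarith [sq_nonneg θ, abs_nonneg θ]
    have h6 := (abs_le.1 h2).1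
    linarith
  have hKco : IsCompact (Set.Icc (-ε) ε \ Set.Ioo (-θ0) θ0) := isCompact_Icc.diff isOpen_Ioo
  have hKne : (Set.Icc (-ε) ε \ Set.Ioo (-θ0) θ0).Nonempty := by
    refine ⟨ε, ⟨⟨by linarith, le_refl ε⟩, ?_⟩⟩
    intro hmem
    exact absurd hmem.2 (by linarith)
  obtain ⟨θ1, hθ1K, hθ1min⟩ := hKco.exists_isMinOn hKne
    (Complex.continuous_re.comp_continuousOn (hφcont.mono Set.diff_subset))
  have hθ1Icc := hθ1K.1
  have hm : 0 < (φ θ1).re := by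
    rcases lt_or_eq_of_le (hφre θ1 hθ1Icc) with h | h
    · exact h
    · exfalso
      have h0 : θ1 = 0 := hφzero θ1 hθ1Icc h.symm
      apply hθ1K.2
      rw [h0]
      exact ⟨by linarith, hθ0p⟩
  set m := (φ θ1).re with hmdef
  refine ⟨min (c/4) (m / ε^2), lt_min (by positivity) (by positivity), ?_⟩
  intro θ hθ
  by_cases hcase : |θ| ≤ θ0
  · have h0 : min (c/4) (m/ε^2) * θ^2 ≤ c/4 * θ^2 :=
      mul_le_mul_of_nonneg_right (min_le_left _ _) (sq_nonneg θ)
    exact le_trans h0 (hquad θ hcase)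
  · have hθK : θ ∈ Set.Icc (-ε) ε \ Set.Ioo (-θ0) θ0 := by
      refine ⟨hθ, fun hmem => hcase (abs_le.2 ⟨le_of_lt hmem.1, le_of_lt hmem.2⟩)⟩
    have h1 : m ≤ (φ θ).re := hθ1min hθK
    have h2 : θ^2 ≤ ε^2 := sq_le_sq' (by linarith [hθ.1]) hθ.2
    have h3 : min (c/4) (m/ε^2) ≤ m/ε^2 := min_le_right _ _
    have h4 : m/ε^2 * ε^2 = m := by field_simp
    have h5 : (0:ℝ) < m/ε^2 := by positivity
    nlinarith [sq_nonneg θ]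

lemma stmt15_ptexp (c : ℝ) (φ : ℝ → ℂ) (t : ℝ)
    (C δ : ℝ) (hδ : 0 < δ)
    (hCb : ∀ θ : ℝ, |θ| < δ → ‖φ θ - (c:ℂ) * θ^2 / 2‖ ≤ C * |θ|^3) :
    Tendsto (fun n : ℕ => -(n:ℂ) * φ (t / Real.sqrt n)) atTop
      (nhds ((-(c/2 * t^2) : ℝ) : ℂ)) := by
  have hsq := stmt15_sqrt
  have hθn : Tendsto (fun n : ℕ => t / Real.sqrt n) atTop (nhds 0) :=
    Tendsto.div_atTop tendsto_const_nhds hsq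
  have hE : Tendsto (fun n : ℕ =>
      (n:ℂ) * (φ (t / Real.sqrt n) - (c:ℂ) * (↑(t / Real.sqrt n))^2 / 2)) atTop (nhds 0) := by
    rw [tendsto_zero_iff_norm_tendsto_zero]
    apply squeeze_zero' (Filter.Eventually.of_forall fun n => norm_nonneg _)
      (g := fun n : ℕ => C * |t|^3 / Real.sqrt n)
    · have hev1 : ∀ᶠ n : ℕ in atTop, |t / Real.sqrt n| < δ := by
        have := hθn.eventually (Metric.ball_mem_nhds (0:ℝ) hδ)
        simpa only [Metric.mem_ball, Real.dist_eq, sub_zero] using this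
      filter_upwards [hev1, eventually_ge_atTop 1] with n h1 hn
      have hnp : (0:ℝ) < n := by exact_mod_cast hn
      have hs : (0:ℝ) < Real.sqrt n := Real.sqrt_pos.2 hnp
      have hb := hCb _ h1
      have hnorm : ‖(n:ℂ)‖ = (n:ℝ) := by simp
      calc ‖(n:ℂ) * (φ (t/Real.sqrt n) - (c:ℂ) * (↑(t/Real.sqrt n))^2 / 2)‖
          = (n:ℝ) * ‖φ (t/Real.sqrt n) - (c:ℂ) * (↑(t/Real.sqrt n))^2 / 2‖ := by
            rw [norm_mul, hnorm]
        _ ≤ (n:ℝ) * (C * |t/Real.sqrt n|^3) :=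
            mul_le_mul_of_nonneg_left hb (le_of_lt hnp)
        _ = C * |t|^3 / Real.sqrt n := by
            rw [abs_div, abs_of_pos hs, div_pow]
            rw [show Real.sqrt n ^ 3 = (n:ℝ) * Real.sqrt n by
              rw [pow_succ, Real.sq_sqrt (le_of_lt hnp)]]
            field_simp
    · exact Tendsto.div_atTop tendsto_const_nhds hsq
  have hmain : ∀ᶠ n : ℕ in atTop,
      -(n:ℂ) * φ (t / Real.sqrt n) =
      -(((c/2 * t^2 : ℝ) : ℂ) +
        (n:ℂ) * (φ (t / Real.sqrt n) - (c:ℂ) * (↑(t / Real.sqrt n))^2 / 2)) := by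
    filter_upwards [eventually_ge_atTop 1] with n hn
    have hnp : (0:ℝ) < n := by exact_mod_cast hn
    have hr : (t / Real.sqrt n)^2 = t^2 / n := by
      rw [div_pow, Real.sq_sqrt (le_of_lt hnp)]
    have h1 : ((t / Real.sqrt n : ℝ) : ℂ)^2 = ((t^2 / n : ℝ) : ℂ) := by
      rw [← Complex.ofReal_pow, hr]
    have hn0 : (n:ℂ) ≠ 0 := Nat.cast_ne_zero.2 (by omega)
    rw [h1]
    push_cast
    field_simp
    ring
  rw [Filter.tendsto_congr' hmain]
  have := (tendsto_const_nhds (x := ((c/2*t^2 : ℝ) : ℂ)) (f := atTop (α := ℕ))).add hE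
  simpa using this.neg

end stmt15aux

/-- Laplace method. Let `φ : ℝ → ℂ` be continuous on `[−ε,ε]` with `Re φ ≥ 0`,
vanishing only at `0`, and `φ(θ) = cθ²/2 + O(θ³)` near `0` with `c > 0`; let
`A : ℝ → ℂ` be continuous on `[−ε,ε]` with `A(θ) = A(0) + O(θ)` and `A(0) ≠ 0`.
Then `∫_{−ε}^{ε} A(θ)e^{−nφ(θ)} dθ = √(2π)·A(0)/√(nc)·(1+o(1))` as `n → ∞`. -/
theorem stmt_15 (ε : ℝ) (hε : 0 < ε) (c : ℝ) (hc : 0 < c) (φ A : ℝ → ℂ)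
    (hφcont : ContinuousOn φ (Set.Icc (-ε) ε))
    (hφre : ∀ θ ∈ Set.Icc (-ε) ε, 0 ≤ (φ θ).re)
    (hφzero : ∀ θ ∈ Set.Icc (-ε) ε, (φ θ).re = 0 → θ = 0)
    (hφtaylor : (fun θ : ℝ => φ θ - (c : ℂ) * θ ^ 2 / 2) =O[nhds 0] fun θ : ℝ => |θ| ^ 3)
    (hAcont : ContinuousOn A (Set.Icc (-ε) ε))
    (hAtaylor : (fun θ : ℝ => A θ - A 0) =O[nhds 0] fun θ : ℝ => θ)
    (hA0 : A 0 ≠ 0) :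
    Tendsto (fun n : ℕ =>
        (∫ θ in (-ε)..ε, A θ * Complex.exp (-(n : ℂ) * φ θ)) *
          (Real.sqrt ((n : ℝ) * c) : ℂ) / ((Real.sqrt (2 * π) : ℂ) * A 0))
      atTop (nhds 1) := by
  classical
  open MeasureTheory in
  obtain ⟨a, ha, hlow⟩ := stmt15_low ε hε c hc φ hφcont hφre hφzero hφtaylor
  obtain ⟨C, hC, δ, hδ, hCb⟩ := stmt15_taylor c φ hφtaylor
  obtain ⟨M, hM⟩ := isCompact_Icc.exists_bound_of_continuousOn hAcont
  have hM0 : 0 ≤ M := le_trans (norm_nonneg _) (hM 0 ⟨by linarith, by linarith⟩)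
  -- notation
  set g : ℕ → ℝ → ℂ := fun n t =>
    A (t / Real.sqrt n) * Complex.exp (-(n:ℂ) * φ (t / Real.sqrt n)) with hgdef
  set F : ℕ → ℝ → ℂ := fun n =>
    (Set.Ioc (-(ε * Real.sqrt n)) (ε * Real.sqrt n)).indicator (g n) with hFdef
  set f : ℝ → ℂ := fun t => A 0 * Complex.exp ((-(c/2 * t^2) : ℝ) : ℂ) with hfdef
  -- mapping property
  have hmaps : ∀ n : ℕ, ∀ t ∈ Set.Ioc (-(ε * Real.sqrt n)) (ε * Real.sqrt n),
      t / Real.sqrt n ∈ Set.Icc (-ε) ε := by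
    intro n t ht
    rcases Nat.eq_zero_or_pos n with rfl | hn
    · simp only [Nat.cast_zero, Real.sqrt_zero, mul_zero, neg_zero] at ht
      exact absurd ht (by simp)
    · have hs : (0:ℝ) < Real.sqrt n := Real.sqrt_pos.2 (by exact_mod_cast hn)
      constructor
      · rw [le_div_iff₀ hs]
        have := ht.1
        nlinarith
      · rw [div_le_iff₀ hs]
        have := ht.2
        nlinarith
  -- continuity on the interval
  have hgcont : ∀ n : ℕ, ContinuousOn (g n)
      (Set.Ioc (-(ε * Real.sqrt n)) (ε * Real.sqrt n)) := by
    intro n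
    have hdiv : Continuous fun t : ℝ => t / Real.sqrt n := continuous_id.div_const _
    refine ContinuousOn.mul ?_ ?_
    · exact hAcont.comp hdiv.continuousOn (hmaps n)
    · exact Complex.continuous_exp.comp_continuousOn
        (continuousOn_const.mul (hφcont.comp hdiv.continuousOn (hmaps n)))
  have hFmeas : ∀ n, AEStronglyMeasurable (F n) volume := fun n =>
    (aestronglyMeasurable_indicator_iff measurableSet_Ioc).2
      ((hgcont n).aestronglyMeasurable measurableSet_Ioc)
  -- uniform bound
  have hbound : ∀ n : ℕ, ∀ᵐ t : ℝ, ‖F n t‖ ≤ M * Real.exp (-a * t^2) := by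
    intro n
    refine Filter.Eventually.of_forall fun t => ?_
    by_cases ht : t ∈ Set.Ioc (-(ε * Real.sqrt n)) (ε * Real.sqrt n)
    · rw [hFdef]
      simp only [Set.indicator_of_mem ht]
      have hmem := hmaps n t ht
      have h1 : ‖A (t / Real.sqrt n)‖ ≤ M := hM _ hmem
      have h2 : ‖Complex.exp (-(n:ℂ) * φ (t / Real.sqrt n))‖ ≤ Real.exp (-a * t^2) := by
        rw [Complex.norm_exp]
        apply Real.exp_le_exp.2
        have hre : (-(n:ℂ) * φ (t / Real.sqrt n)).re
            = -((n:ℝ) * (φ (t / Real.sqrt n)).re) := by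
          simp [Complex.mul_re]
        rw [hre]
        have h3 : a * (t / Real.sqrt n)^2 ≤ (φ (t / Real.sqrt n)).re := hlow _ hmem
        rcases Nat.eq_zero_or_pos n with rfl | hn
        · exfalso
          simp only [Nat.cast_zero, Real.sqrt_zero, mul_zero, neg_zero] at ht
          exact absurd ht (by simp)
        · have hnp : (0:ℝ) < n := by exact_mod_cast hn
          have h4 : (n:ℝ) * (t / Real.sqrt n)^2 = t^2 := by
            rw [div_pow, Real.sq_sqrt (le_of_lt hnp)]
            field_simp
          nlinarith [mul_le_mul_of_nonneg_left h3 (le_of_lt hnp)]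
      calc ‖A (t / Real.sqrt n) * Complex.exp (-(n:ℂ) * φ (t / Real.sqrt n))‖
          = ‖A (t / Real.sqrt n)‖ * ‖Complex.exp (-(n:ℂ) * φ (t / Real.sqrt n))‖ :=
            norm_mul _ _
        _ ≤ M * Real.exp (-a * t^2) :=
            mul_le_mul h1 h2 (norm_nonneg _) hM0
    · rw [hFdef]
      simp only [Set.indicator_of_notMem ht, norm_zero]
      positivity
  have hIb : Integrable (fun t : ℝ => M * Real.exp (-a * t^2)) volume :=
    (integrable_exp_neg_mul_sq ha).const_mul M
  -- pointwise convergence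
  have hlim : ∀ t : ℝ, Tendsto (fun n : ℕ => F n t) atTop (nhds (f t)) := by
    intro t
    have hev : ∀ᶠ n : ℕ in atTop, t ∈ Set.Ioc (-(ε * Real.sqrt n)) (ε * Real.sqrt n) := by
      have h1 := (stmt15_sqrt.const_mul_atTop hε).eventually_ge_atTop (|t| + 1)
      filter_upwards [h1] with n hn
      have h2 : |t| < ε * Real.sqrt n := by linarith
      obtain ⟨h3, h4⟩ := abs_lt.1 h2
      exact ⟨h3, le_of_lt h4⟩
    have hθn : Tendsto (fun n : ℕ => t / Real.sqrt n) atTop (nhds 0) :=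
      Tendsto.div_atTop tendsto_const_nhds stmt15_sqrt
    have hA : Tendsto (fun n : ℕ => A (t / Real.sqrt n)) atTop (nhds (A 0)) := by
      have h1 : Tendsto (fun θ : ℝ => A θ - A 0) (nhds 0) (nhds 0) :=
        hAtaylor.trans_tendsto tendsto_id
      have h2 : Tendsto A (nhds 0) (nhds (A 0)) := by
        have := h1.add (tendsto_const_nhds (x := A 0))
        simpa using this
      exact h2.comp hθn
    have hexp : Tendsto (fun n : ℕ => Complex.exp (-(n:ℂ) * φ (t / Real.sqrt n)))
        atTop (nhds (Complex.exp ((-(c/2 * t^2) : ℝ) : ℂ))) :=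
      (Complex.continuous_exp.tendsto _).comp (stmt15_ptexp c φ t C δ hδ hCb)
    have hg : Tendsto (fun n : ℕ => g n t) atTop (nhds (f t)) := hA.mul hexp
    refine hg.congr' ?_
    filter_upwards [hev] with n hn
    rw [hFdef]
    simp only [Set.indicator_of_mem hn]
  -- dominated convergence
  have hDCT : Tendsto (fun n : ℕ => ∫ t : ℝ, F n t) atTop (nhds (∫ t : ℝ, f t)) :=
    tendsto_integral_of_dominated_convergence _ hFmeas hIb hbound
      (Filter.Eventually.of_forall hlim)
  -- compute the limit integral
  have hfint : (∫ t : ℝ, f t) = A 0 * ((Real.sqrt (π / (c/2)) : ℝ) : ℂ) := by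
    rw [hfdef]
    rw [MeasureTheory.integral_const_mul]
    congr 1
    have heq : ∀ t : ℝ, Complex.exp ((-(c/2 * t^2) : ℝ) : ℂ)
        = ((Real.exp (-(c/2) * t^2) : ℝ) : ℂ) := by
      intro t
      rw [← Complex.ofReal_exp]
      norm_num
    simp_rw [heq]
    exact (_root_.integral_ofReal (𝕜 := ℂ) (f := fun t : ℝ => Real.exp (-(c/2)*t^2))).trans
      (by rw [integral_gaussian]; norm_cast)
  -- rewrite the target sequence eventually
  have h2π : (0:ℝ) < 2 * π := by positivity
  have hsπ : (0:ℝ) < Real.sqrt (2*π) := Real.sqrt_pos.2 h2π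
  have hkey : ∀ᶠ n : ℕ in atTop,
      (∫ θ in (-ε)..ε, A θ * Complex.exp (-(n:ℂ) * φ θ)) *
          (Real.sqrt ((n:ℝ) * c) : ℂ) / ((Real.sqrt (2*π) : ℂ) * A 0)
      = (∫ t : ℝ, F n t) * (Real.sqrt c : ℂ) / ((Real.sqrt (2*π) : ℂ) * A 0) := by
    filter_upwards [eventually_ge_atTop 1] with n hn
    have hnp : (0:ℝ) < n := by exact_mod_cast hn
    have hs : (0:ℝ) < Real.sqrt n := Real.sqrt_pos.2 hnp
    have e1 : -(ε * Real.sqrt n) / Real.sqrt n = -ε := by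
      field_simp
    have e2 : ε * Real.sqrt n / Real.sqrt n = ε := by
      field_simp
    have h1 : (∫ t : ℝ, F n t)
        = Real.sqrt n • ∫ θ in (-ε)..ε, A θ * Complex.exp (-(n:ℂ) * φ θ) := by
      rw [hFdef]
      rw [MeasureTheory.integral_indicator measurableSet_Ioc]
      rw [← intervalIntegral.integral_of_le (by nlinarith : -(ε * Real.sqrt n) ≤ ε * Real.sqrt n)]
      have h2 := intervalIntegral.integral_comp_div (a := -(ε * Real.sqrt n))
        (b := ε * Real.sqrt n)
        (fun θ => A θ * Complex.exp (-(n:ℂ) * φ θ)) (ne_of_gt hs)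
      rw [e1, e2] at h2
      exact h2
    rw [h1]
    have h3 : (Real.sqrt ((n:ℝ) * c) : ℝ) = Real.sqrt n * Real.sqrt c :=
      Real.sqrt_mul (by positivity) c
    rw [h3]
    rw [Complex.real_smul]
    push_cast
    ring
  rw [Filter.tendsto_congr' hkey]
  -- final limit computation
  have hfinal : Tendsto (fun n : ℕ =>
      (∫ t : ℝ, F n t) * (Real.sqrt c : ℂ) / ((Real.sqrt (2*π) : ℂ) * A 0)) atTop
      (nhds ((A 0 * ((Real.sqrt (π / (c/2)) : ℝ) : ℂ)) * (Real.sqrt c : ℂ)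
        / ((Real.sqrt (2*π) : ℂ) * A 0))) := by
    rw [← hfint]
    exact (hDCT.mul_const _).div_const _
  have hval : (A 0 * ((Real.sqrt (π / (c/2)) : ℝ) : ℂ)) * (Real.sqrt c : ℂ)
      / ((Real.sqrt (2*π) : ℂ) * A 0) = 1 := by
    have hq : Real.sqrt (π / (c/2)) * Real.sqrt c = Real.sqrt (2*π) := by
      rw [← Real.sqrt_mul (by positivity) c]
      congr 1
      field_simp
    have hπc : ((Real.sqrt (2*π) : ℝ) : ℂ) ≠ 0 := by
      exact_mod_cast ne_of_gt hsπ
    have h2 : (A 0 * ((Real.sqrt (π / (c/2)) : ℝ) : ℂ)) * ((Real.sqrt c : ℝ) : ℂ)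
        = ((Real.sqrt (2*π) : ℝ) : ℂ) * A 0 := by
      rw [mul_assoc, ← Complex.ofReal_mul, hq]; ring
    rw [h2, div_self (mul_ne_zero hπc hA0)]
  rw [hval] at hfinal
  exact hfinal
end
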